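/- With H = (R^{sm} ⋊ S) × R_{r−1} and the involution a as defined in the construction (acting on Ω of size mrs + r − 1), one has |H : H ∩ H^a| = rs, the core of H ∩ H^a in H equals L = (∏_{j=1}^{m−1} ∏_{i=0}^{s−1} R(Y_{i,j})) × R(X_m), and the action of H/L on the right cosets of (H ∩ H^a)/L is permutation equivalent to the natural imprimitive action of R ≀ S of degree rs. -/

import Mathlib

open Equiv Subgroup

/-- The imprimitive wreath product `R ≀ S` of degree `rs`, as a set of permutations of
`Fin r × Fin s` (blocks `Fin r × {i}`). -/
def wreathSet {r s : ℕ} (R : Subgroup (Equiv.Perm (Fin r))) (S : Subgroup (Equiv.Perm (Fin s))) :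
    Set (Equiv.Perm (Fin r × Fin s)) :=
  {σ | ∃ τ ∈ S, ∃ f : Fin s → Equiv.Perm (Fin r), (∀ i, f i ∈ R) ∧
    ∀ p : Fin r × Fin s, σ p = (f p.2 p.1, τ p.2)}

/-- The subgroup `H = (R^{sm} ⋊ S) × R_{r-1}` of `Sym(Ω)`, `Ω = {0,…,mrs+r-2}`,
described as the set of permutations preserving the block structure
`Y_{i,j} = {z + ir + jrs : z < r}` (`i < s`, `j < m`) and `X_m = {z + mrs : z < r-1}`,
acting on each block via `R` (resp. `R_{r-1}`) and permuting the blocks of each `X_j`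
via `S`. -/
def Hset (r s m : ℕ) (hr : 1 < r) (R : Subgroup (Equiv.Perm (Fin r)))
    (S : Subgroup (Equiv.Perm (Fin s))) : Set (Equiv.Perm (Fin (m * r * s + r - 1))) :=
  {h | ∃ τ ∈ S,
    (∀ (i : ℕ) (hi : i < s) (j : ℕ), j < m →
      ∃ ρ ∈ R, ∀ (z : ℕ) (hz : z < r) (ω : Fin (m * r * s + r - 1)),
        (ω : ℕ) = z + i * r + j * (r * s) →
        ((h ω : Fin (m * r * s + r - 1)) : ℕ) =
          ((ρ ⟨z, hz⟩ : Fin r) : ℕ) + ((τ ⟨i, hi⟩ : Fin s) : ℕ) * r + j * (r * s)) ∧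
    (∃ ρ ∈ R, ρ ⟨r - 1, by omega⟩ = (⟨r - 1, by omega⟩ : Fin r) ∧
      ∀ (z : ℕ) (hz : z < r - 1) (ω : Fin (m * r * s + r - 1)),
        (ω : ℕ) = z + m * (r * s) →
        ((h ω : Fin (m * r * s + r - 1)) : ℕ) =
          ((ρ ⟨z, by omega⟩ : Fin r) : ℕ) + m * (r * s))}

/-- The subgroup `L = (∏_{j=1}^{m-1} ∏_{i=0}^{s-1} R(Y_{i,j})) × R(X_m)`: permutations
fixing `X_0 = {0,…,rs-1}` pointwise, acting on each `Y_{i,j}` with `j ≥ 1` via `R`, and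
on `X_m` via `R_{r-1}`. -/
def Lset (r s m : ℕ) (hr : 1 < r) (R : Subgroup (Equiv.Perm (Fin r))) :
    Set (Equiv.Perm (Fin (m * r * s + r - 1))) :=
  {h | (∀ ω : Fin (m * r * s + r - 1), (ω : ℕ) < r * s → h ω = ω) ∧
    (∀ (i : ℕ) (hi : i < s) (j : ℕ), 1 ≤ j → j < m →
      ∃ ρ ∈ R, ∀ (z : ℕ) (hz : z < r) (ω : Fin (m * r * s + r - 1)),
        (ω : ℕ) = z + i * r + j * (r * s) →
        ((h ω : Fin (m * r * s + r - 1)) : ℕ) = ((ρ ⟨z, hz⟩ : Fin r) : ℕ) + i * r + j * (r * s)) ∧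
    (∃ ρ ∈ R, ρ ⟨r - 1, by omega⟩ = (⟨r - 1, by omega⟩ : Fin r) ∧
      ∀ (z : ℕ) (hz : z < r - 1) (ω : Fin (m * r * s + r - 1)),
        (ω : ℕ) = z + m * (r * s) →
        ((h ω : Fin (m * r * s + r - 1)) : ℕ) = ((ρ ⟨z, by omega⟩ : Fin r) : ℕ) + m * (r * s))}

/-- The defining rules for the involution `a` of Section 4 of the paper. -/
def isA (r s m : ℕ) (a : Equiv.Perm (Fin (m * r * s + r - 1))) : Prop :=
  a * a = 1 ∧
  (∀ z : ℕ, z < r - 1 → ∀ ω : Fin (m * r * s + r - 1), (ω : ℕ) = z →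
    ((a ω : Fin (m * r * s + r - 1)) : ℕ) = z + m * (r * s)) ∧
  (∀ ω : Fin (m * r * s + r - 1), (ω : ℕ) = r - 1 → a ω = ω) ∧
  (∀ j : ℕ, Odd j → 1 ≤ j → j ≤ m - 2 → ∀ z : ℕ, z < r →
    ∀ ω : Fin (m * r * s + r - 1), (ω : ℕ) = z + j * (r * s) →
      ((a ω : Fin (m * r * s + r - 1)) : ℕ) = z + (j + 1) * (r * s)) ∧
  (∀ j : ℕ, Even j → 2 ≤ j → j ≤ m - 1 → ∀ z : ℕ, z < r →
    ∀ ω : Fin (m * r * s + r - 1), (ω : ℕ) = z + j * (r * s) →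
      ((a ω : Fin (m * r * s + r - 1)) : ℕ) = z + (j - 1) * (r * s)) ∧
  (∀ j : ℕ, Even j → j ≤ m - 3 → ∀ i : ℕ, 1 ≤ i → i ≤ s - 1 → ∀ z : ℕ, z < r →
    ∀ ω : Fin (m * r * s + r - 1), (ω : ℕ) = z + i * r + j * (r * s) →
      ((a ω : Fin (m * r * s + r - 1)) : ℕ) = z + i * r + (j + 1) * (r * s)) ∧
  (∀ j : ℕ, Odd j → 1 ≤ j → j ≤ m - 2 → ∀ i : ℕ, 1 ≤ i → i ≤ s - 1 → ∀ z : ℕ, z < r →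
    ∀ ω : Fin (m * r * s + r - 1), (ω : ℕ) = z + i * r + j * (r * s) →
      ((a ω : Fin (m * r * s + r - 1)) : ℕ) = z + i * r + (j - 1) * (r * s)) ∧
  (∀ i : ℕ, 1 ≤ i → i ≤ s - 1 → ∀ z : ℕ, z < r →
    ∀ ω : Fin (m * r * s + r - 1), (ω : ℕ) = z + i * r + (m - 1) * (r * s) → a ω = ω) ∧
  (∀ z : ℕ, z < r - 1 → ∀ ω : Fin (m * r * s + r - 1), (ω : ℕ) = z + m * (r * s) →
    ((a ω : Fin (m * r * s + r - 1)) : ℕ) = z)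


theorem Equiv.Perm.apply_inv_self {α : Type*} (f : Equiv.Perm α) (x : α) : f (f⁻¹ x) = x :=
  f.apply_symm_apply x

theorem Equiv.Perm.inv_apply_self {α : Type*} (f : Equiv.Perm α) (x : α) : f⁻¹ (f x) = x :=
  f.symm_apply_apply x

section Aux
variable {r s m : ℕ}

lemma enc_lt' (z : Fin r) (i : Fin s) (j : Fin m) :
    (z : ℕ) + (i:ℕ)*r + (j:ℕ)*(r*s) < m*(r*s) := by
  have hz := z.2; have hi := i.2; have hj := j.2
  have h1 : ((i:ℕ)+1)*r ≤ s*r := Nat.mul_le_mul_right r hi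
  have h2 : ((j:ℕ)+1)*(r*s) ≤ m*(r*s) := Nat.mul_le_mul_right (r*s) hj
  have h4 : s*r = r*s := by ring
  have h5 : ((i:ℕ)+1)*r = (i:ℕ)*r+r := by ring
  have h6 : ((j:ℕ)+1)*(r*s) = (j:ℕ)*(r*s)+(r*s) := by ring
  omega

lemma enc_lt (hr : 1 < r) (z : Fin r) (i : Fin s) (j : Fin m) :
    (z : ℕ) + (i:ℕ)*r + (j:ℕ)*(r*s) < m*r*s + r - 1 := by
  have := enc_lt' z i j
  have h3 : m*(r*s) = m*r*s := by ring
  omega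

lemma encm_lt (z : Fin (r-1)) : (z:ℕ) + m*(r*s) < m*r*s + r - 1 := by
  have h3 : m*(r*s) = m*r*s := by ring
  have := z.2; omega

lemma zi_lt (z : Fin r) (i : Fin s) : (z:ℕ) + (i:ℕ)*r < r*s := by
  have h1 : ((i:ℕ)+1)*r ≤ s*r := Nat.mul_le_mul_right r i.2
  have h4 : s*r = r*s := by ring
  have h5 : ((i:ℕ)+1)*r = (i:ℕ)*r+r := by ring
  have := z.2; omega

/-- The coordinate equivalence on `Ω`. -/
def bigE (hr : 1 < r) : Fin (m*r*s+r-1) ≃ ((Fin r × Fin s × Fin m) ⊕ Fin (r-1)) where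
  toFun ω :=
    if h : (ω:ℕ) < m*(r*s) then
      Sum.inl (⟨(ω:ℕ) % r, Nat.mod_lt _ (by omega)⟩,
        ⟨(ω:ℕ) % (r*s) / r, by
          have hrs : 0 < r*s := Nat.pos_of_ne_zero (by
            rintro h0; rw [h0, mul_zero] at h; omega)
          have := Nat.mod_lt (ω:ℕ) hrs
          exact Nat.div_lt_of_lt_mul (by omega)⟩,
        ⟨(ω:ℕ) / (r*s), Nat.div_lt_of_lt_mul (Nat.lt_of_lt_of_eq h (mul_comm _ _))⟩)
    else Sum.inr ⟨(ω:ℕ) - m*(r*s), by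
      have h3 : m*(r*s) = m*r*s := by ring
      have := ω.2; omega⟩
  invFun := Sum.elim (fun x => ⟨(x.1:ℕ) + (x.2.1:ℕ)*r + (x.2.2:ℕ)*(r*s), enc_lt hr _ _ _⟩)
    (fun z => ⟨(z:ℕ) + m*(r*s), encm_lt z⟩)
  left_inv := by
    intro ω
    by_cases h : (ω:ℕ) < m*(r*s)
    · simp only [dif_pos h, Sum.elim_inl]
      apply Fin.ext
      have e1 : (ω:ℕ) % (r*s) % r + ((ω:ℕ) % (r*s)/r) * r = (ω:ℕ) % (r*s) := Nat.mod_add_div' _ _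
      have e2 : (ω:ℕ) % (r*s) + ((ω:ℕ)/(r*s))*(r*s) = (ω:ℕ) := Nat.mod_add_div' _ _
      have e3 : (ω:ℕ) % (r*s) % r = (ω:ℕ) % r := Nat.mod_mod_of_dvd _ ⟨s, rfl⟩
      simp only []
      omega
    · simp only [dif_neg h, Sum.elim_inr]
      apply Fin.ext
      simp only []
      omega
  right_inv := by
    rintro (⟨z, i, j⟩ | z)
    · simp only [Sum.elim_inl]
      have hv : (z:ℕ) + (i:ℕ)*r + (j:ℕ)*(r*s) < m*(r*s) := enc_lt' z i j
      erw [dif_pos hv]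
      have hr0 : 0 < r := by omega
      have hs0 : 0 < s := lt_of_le_of_lt (Nat.zero_le _) i.2
      have hrs0 : 0 < r*s := by positivity
      have hm1 : ((z:ℕ) + (i:ℕ)*r + (j:ℕ)*(r*s)) % r = (z:ℕ) := by
        have : (z:ℕ) + (i:ℕ)*r + (j:ℕ)*(r*s) = (z:ℕ) + ((i:ℕ) + (j:ℕ)*s)*r := by ring
        rw [this, Nat.add_mul_mod_self_right, Nat.mod_eq_of_lt z.2]
      have hm2 : ((z:ℕ) + (i:ℕ)*r + (j:ℕ)*(r*s)) % (r*s) = (z:ℕ) + (i:ℕ)*r := by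
        rw [Nat.add_mul_mod_self_right, Nat.mod_eq_of_lt (zi_lt z i)]
      have hm3 : ((z:ℕ) + (i:ℕ)*r)/r = (i:ℕ) := by
        rw [Nat.add_mul_div_right _ _ hr0, Nat.div_eq_of_lt z.2, Nat.zero_add]
      have hm4 : ((z:ℕ) + (i:ℕ)*r + (j:ℕ)*(r*s))/(r*s) = (j:ℕ) := by
        rw [Nat.add_mul_div_right _ _ hrs0, Nat.div_eq_of_lt (zi_lt z i), Nat.zero_add]
      congr 1
      refine Prod.ext (Fin.ext ?_) (Prod.ext (Fin.ext ?_) (Fin.ext ?_)) <;>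
        simp only [hm1, hm2, hm3, hm4]
    · simp only [Sum.elim_inr]
      have hv : ¬ ((z:ℕ) + m*(r*s) < m*(r*s)) := by omega
      erw [dif_neg hv]
      congr 1
      apply Fin.ext
      simp only []
      omega
end Aux
section Aux2
variable {r s m : ℕ}

lemma perm_lt_last (hr : 1 < r) (ρ : Equiv.Perm (Fin r))
    (hfix : ρ ⟨r-1, by omega⟩ = ⟨r-1, by omega⟩) (z : ℕ) (hz : z < r - 1) :
    ((ρ ⟨z, by omega⟩ : Fin r) : ℕ) < r - 1 := by
  have h2 := (ρ ⟨z, by omega⟩).2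
  rcases Nat.lt_or_ge ((ρ ⟨z, by omega⟩ : Fin r) : ℕ) (r-1) with h | h
  · exact h
  · exfalso
    have he : (ρ ⟨z, by omega⟩ : Fin r) = ⟨r-1, by omega⟩ :=
      Fin.ext (show ((ρ ⟨z, by omega⟩ : Fin r) : ℕ) = r - 1 by omega)
    have h3 := ρ.injective (he.trans hfix.symm)
    have h4 : z = r - 1 := congrArg Fin.val h3
    omega

/-- restriction of a permutation fixing `r-1` to `Fin (r-1)` -/
def restr (hr : 1 < r) (ρ : Equiv.Perm (Fin r))
    (hfix : ρ ⟨r-1, by omega⟩ = ⟨r-1, by omega⟩) (z : Fin (r-1)) : Fin (r-1) :=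
  ⟨((ρ ⟨z.1, by omega⟩ : Fin r) : ℕ), perm_lt_last hr ρ hfix z.1 z.2⟩

/-- coordinate form of membership in `Hset` -/
def Pcoord (hr : 1 < r) (R : Subgroup (Equiv.Perm (Fin r))) (S : Subgroup (Equiv.Perm (Fin s)))
    (h : Equiv.Perm (Fin (m*r*s+r-1))) : Prop :=
  ∃ τ ∈ S,
    (∀ (i : Fin s) (j : Fin m), ∃ ρ ∈ R, ∀ z : Fin r,
      h ((bigE hr).symm (Sum.inl (z,i,j))) = (bigE hr).symm (Sum.inl (ρ z, τ i, j))) ∧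
    (∃ ρ ∈ R, ∃ hfix : ρ ⟨r-1, by omega⟩ = ⟨r-1, by omega⟩, ∀ z : Fin (r-1),
      h ((bigE hr).symm (Sum.inr z)) = (bigE hr).symm (Sum.inr (restr hr ρ hfix z)))

lemma mem_Hset_iff (hr : 1 < r) (R : Subgroup (Equiv.Perm (Fin r)))
    (S : Subgroup (Equiv.Perm (Fin s))) (h : Equiv.Perm (Fin (m*r*s+r-1))) :
    h ∈ Hset r s m hr R S ↔ Pcoord hr R S h := by
  constructor
  · rintro ⟨τ, hτS, hcl1, ρm, hρmR, hρmfix, hcl2⟩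
    refine ⟨τ, hτS, fun i j => ?_, ρm, hρmR, hρmfix, fun z => ?_⟩
    · obtain ⟨ρ, hρR, hP⟩ := hcl1 i.1 i.2 j.1 j.2
      refine ⟨ρ, hρR, fun z => ?_⟩
      have hω : (((bigE hr).symm (Sum.inl (z,i,j)) : Fin (m*r*s+r-1)) : ℕ)
          = z.1 + i.1*r + j.1*(r*s) := rfl
      have h2 := hP z.1 z.2 _ hω
      simp only [Fin.eta] at h2
      exact Fin.ext (by rw [h2]; rfl)
    · have hω : (((bigE hr).symm (Sum.inr z) : Fin (m*r*s+r-1)) : ℕ) = z.1 + m*(r*s) := rfl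
      have h2 := hcl2 z.1 z.2 _ hω
      exact Fin.ext (by rw [h2]; rfl)
  · rintro ⟨τ, hτS, hcl1, ρm, hρmR, hfix, hcl2⟩
    refine ⟨τ, hτS, fun i hi j hj => ?_, ρm, hρmR, hfix, fun z hz ω hω => ?_⟩
    · obtain ⟨ρ, hρR, hP⟩ := hcl1 ⟨i,hi⟩ ⟨j,hj⟩
      refine ⟨ρ, hρR, fun z hz ω hω => ?_⟩
      have hωe : ω = (bigE hr).symm (Sum.inl (⟨z,hz⟩,⟨i,hi⟩,⟨j,hj⟩)) := Fin.ext (by rw [hω]; rfl)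
      rw [hωe, hP ⟨z,hz⟩]; rfl
    · have hωe : ω = (bigE hr).symm (Sum.inr ⟨z, hz⟩) := Fin.ext (by rw [hω]; rfl)
      rw [hωe, hcl2 ⟨z,hz⟩]; rfl

lemma Pcoord_one (hr : 1 < r) (R : Subgroup (Equiv.Perm (Fin r)))
    (S : Subgroup (Equiv.Perm (Fin s))) : Pcoord (m := m) hr R S 1 := by
  refine ⟨1, S.one_mem, fun i j => ⟨1, R.one_mem, fun z => by simp⟩, 1, R.one_mem, rfl, fun z => ?_⟩
  simp only [Equiv.Perm.one_apply]
  rfl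

lemma Pcoord_mul (hr : 1 < r) {R : Subgroup (Equiv.Perm (Fin r))}
    {S : Subgroup (Equiv.Perm (Fin s))} {h1 h2 : Equiv.Perm (Fin (m*r*s+r-1))}
    (C1 : Pcoord hr R S h1) (C2 : Pcoord hr R S h2) : Pcoord hr R S (h1 * h2) := by
  obtain ⟨τ1, hτ1, cl1, ρ1m, hρ1m, fix1, P1m⟩ := C1
  obtain ⟨τ2, hτ2, cl2, ρ2m, hρ2m, fix2, P2m⟩ := C2
  have fix12 : (ρ1m * ρ2m) ⟨r-1, by omega⟩ = (⟨r-1, by omega⟩ : Fin r) := by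
    rw [Equiv.Perm.mul_apply, fix2, fix1]
  refine ⟨τ1*τ2, S.mul_mem hτ1 hτ2, fun i j => ?_, ρ1m*ρ2m, R.mul_mem hρ1m hρ2m, fix12,
    fun z => ?_⟩
  · obtain ⟨ρ2, hρ2, P2⟩ := cl2 i j
    obtain ⟨ρ1, hρ1, P1⟩ := cl1 (τ2 i) j
    refine ⟨ρ1*ρ2, R.mul_mem hρ1 hρ2, fun z => ?_⟩
    simp only [Equiv.Perm.mul_apply, P2 z, P1 (ρ2 z)]
  · have key : restr hr (ρ1m*ρ2m) fix12 z = restr hr ρ1m fix1 (restr hr ρ2m fix2 z) := by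
      apply Fin.ext
      simp only [restr, Equiv.Perm.mul_apply, Fin.eta]
    simp only [Equiv.Perm.mul_apply, P2m z, P1m (restr hr ρ2m fix2 z), key]

lemma Pcoord_inv (hr : 1 < r) {R : Subgroup (Equiv.Perm (Fin r))}
    {S : Subgroup (Equiv.Perm (Fin s))} {h : Equiv.Perm (Fin (m*r*s+r-1))}
    (C : Pcoord hr R S h) : Pcoord hr R S h⁻¹ := by
  obtain ⟨τ, hτ, cl, ρm, hρm, fix, Pm⟩ := C
  have fix' : ρm⁻¹ ⟨r-1, by omega⟩ = (⟨r-1, by omega⟩ : Fin r) := by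
    rw [Equiv.Perm.inv_eq_iff_eq, fix]
  refine ⟨τ⁻¹, S.inv_mem hτ, fun i j => ?_, ρm⁻¹, R.inv_mem hρm, fix', fun z => ?_⟩
  · obtain ⟨ρ, hρ, P⟩ := cl (τ⁻¹ i) j
    refine ⟨ρ⁻¹, R.inv_mem hρ, fun z => ?_⟩
    have h2 := P (ρ⁻¹ z)
    rw [Equiv.Perm.apply_inv_self, Equiv.Perm.apply_inv_self] at h2
    rw [← h2, Equiv.Perm.inv_apply_self]
  · have key : restr hr ρm fix (restr hr ρm⁻¹ fix' z) = z := by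
      apply Fin.ext
      simp only [restr, Fin.eta, Equiv.Perm.apply_inv_self]
    have h2 := Pm (restr hr ρm⁻¹ fix' z)
    rw [key] at h2
    rw [← h2, Equiv.Perm.inv_apply_self]

/-- `Hset` as a subgroup -/
def HsetSub (r s m : ℕ) (hr : 1 < r) (R : Subgroup (Equiv.Perm (Fin r)))
    (S : Subgroup (Equiv.Perm (Fin s))) : Subgroup (Equiv.Perm (Fin (m*r*s+r-1))) where
  carrier := Hset r s m hr R S
  one_mem' := (mem_Hset_iff hr R S 1).mpr (Pcoord_one hr R S)
  mul_mem' ha hb := (mem_Hset_iff hr R S _).mpr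
    (Pcoord_mul hr ((mem_Hset_iff hr R S _).mp ha) ((mem_Hset_iff hr R S _).mp hb))
  inv_mem' ha := (mem_Hset_iff hr R S _).mpr (Pcoord_inv hr ((mem_Hset_iff hr R S _).mp ha))

lemma mem_HsetSub_iff (hr : 1 < r) (R : Subgroup (Equiv.Perm (Fin r)))
    (S : Subgroup (Equiv.Perm (Fin s))) (h : Equiv.Perm (Fin (m*r*s+r-1))) :
    h ∈ HsetSub r s m hr R S ↔ Pcoord hr R S h := mem_Hset_iff hr R S h

end Aux2

section Aux3
variable {r s m : ℕ}

lemma sE_inl_val (hr : 1 < r) (z : Fin r) (i : Fin s) (j : Fin m) :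
    (((bigE hr).symm (Sum.inl (z,i,j)) : Fin (m*r*s+r-1)) : ℕ) = z.1 + i.1*r + j.1*(r*s) := rfl

lemma sE_inr_val (hr : 1 < r) (z : Fin (r-1)) :
    (((bigE hr).symm (Sum.inr z) : Fin (m*r*s+r-1)) : ℕ) = z.1 + m*(r*s) := rfl

lemma lt_rs_decomp (hr : 1 < r) (hm : 0 < m) (ω : Fin (m*r*s+r-1)) (hlt : (ω:ℕ) < r*s) :
    ∃ (z : Fin r) (i : Fin s), ω = (bigE hr).symm (Sum.inl (z,i,⟨0,hm⟩)) := by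
  rcases hE : bigE hr ω with x | z
  · obtain ⟨z, i, j⟩ := x
    have hω : ω = (bigE hr).symm (Sum.inl (z,i,j)) := by rw [← hE, Equiv.symm_apply_apply]
    have hval : (ω:ℕ) = z.1 + i.1*r + j.1*(r*s) := by rw [hω]; rfl
    rcases Nat.eq_zero_or_pos j.1 with h0 | h0
    · exact ⟨z, i, by rwa [show j = (⟨0,hm⟩ : Fin m) from Fin.ext h0] at hω⟩
    · exfalso
      have : r*s ≤ j.1*(r*s) := Nat.le_mul_of_pos_left (r*s) h0
      omega
  · exfalso
    have hω : ω = (bigE hr).symm (Sum.inr z) := by rw [← hE, Equiv.symm_apply_apply]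
    have hval : (ω:ℕ) = z.1 + m*(r*s) := by rw [hω]; rfl
    have h2 : r*s ≤ m*(r*s) := Nat.le_mul_of_pos_left (r*s) hm
    omega

/-- coordinate form of membership in `Lset` -/
def Lcoord (hr : 1 < r) (hm : 0 < m) (R : Subgroup (Equiv.Perm (Fin r)))
    (h : Equiv.Perm (Fin (m*r*s+r-1))) : Prop :=
  (∀ (z : Fin r) (i : Fin s),
      h ((bigE hr).symm (Sum.inl (z,i,⟨0,hm⟩))) = (bigE hr).symm (Sum.inl (z,i,⟨0,hm⟩))) ∧
  (∀ (i : Fin s) (j : Fin m), j.1 ≠ 0 → ∃ ρ ∈ R, ∀ z : Fin r,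
      h ((bigE hr).symm (Sum.inl (z,i,j))) = (bigE hr).symm (Sum.inl (ρ z, i, j))) ∧
  (∃ ρ ∈ R, ∃ hfix : ρ ⟨r-1, by omega⟩ = ⟨r-1, by omega⟩, ∀ z : Fin (r-1),
      h ((bigE hr).symm (Sum.inr z)) = (bigE hr).symm (Sum.inr (restr hr ρ hfix z)))

lemma mem_Lset_iff (hr : 1 < r) (hm : 0 < m) (R : Subgroup (Equiv.Perm (Fin r)))
    (h : Equiv.Perm (Fin (m*r*s+r-1))) :
    h ∈ Lset r s m hr R ↔ Lcoord hr hm R h := by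
  constructor
  · rintro ⟨l1, l2, ρm, hρm, hfix, l3⟩
    refine ⟨fun z i => ?_, fun i j hj => ?_, ρm, hρm, hfix, fun z => ?_⟩
    · apply l1
      have hval := sE_inl_val (m:=m) hr z i ⟨0,hm⟩
      have := zi_lt z i
      simp only [Fin.val_mk] at hval ⊢
      omega
    · obtain ⟨ρ, hρR, hP⟩ := l2 i.1 i.2 j.1 (by omega) j.2
      refine ⟨ρ, hρR, fun z => ?_⟩
      have h2 := hP z.1 z.2 _ (sE_inl_val hr z i j)
      simp only [Fin.eta] at h2
      exact Fin.ext (by rw [h2]; rfl)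
    · have h2 := l3 z.1 z.2 _ (sE_inr_val hr z)
      exact Fin.ext (by rw [h2]; rfl)
  · rintro ⟨l1, l2, ρm, hρm, hfix, l3⟩
    refine ⟨fun ω hω => ?_, fun i hi j hj1 hjm => ?_, ρm, hρm, hfix, fun z hz ω hω => ?_⟩
    · obtain ⟨z, i, hdec⟩ := lt_rs_decomp hr hm ω hω
      rw [hdec, l1 z i]
    · obtain ⟨ρ, hρR, hP⟩ := l2 ⟨i,hi⟩ ⟨j,hjm⟩ (show j ≠ 0 by omega)
      refine ⟨ρ, hρR, fun z hz ω hω => ?_⟩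
      have hωe : ω = (bigE hr).symm (Sum.inl (⟨z,hz⟩,⟨i,hi⟩,⟨j,hjm⟩)) := Fin.ext (by rw [hω]; rfl)
      rw [hωe, hP ⟨z,hz⟩]; rfl
    · have hωe : ω = (bigE hr).symm (Sum.inr ⟨z, hz⟩) := Fin.ext (by rw [hω]; rfl)
      rw [hωe, l3 ⟨z,hz⟩]; rfl

lemma Lcoord_to_Pcoord (hr : 1 < r) (hm : 0 < m) (R : Subgroup (Equiv.Perm (Fin r)))
    (S : Subgroup (Equiv.Perm (Fin s))) (h : Equiv.Perm (Fin (m*r*s+r-1)))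
    (C : Lcoord hr hm R h) : Pcoord hr R S h := by
  obtain ⟨l1, l2, ρm, hρm, hfix, l3⟩ := C
  refine ⟨1, S.one_mem, fun i j => ?_, ρm, hρm, hfix, l3⟩
  rcases Nat.eq_zero_or_pos j.1 with h0 | h0
  · refine ⟨1, R.one_mem, fun z => ?_⟩
    rw [show j = (⟨0,hm⟩ : Fin m) from Fin.ext h0]
    simpa using l1 z i
  · obtain ⟨ρ, hρR, hP⟩ := l2 i j (by omega)
    exact ⟨ρ, hρR, fun z => by simpa using hP z⟩

lemma Pcoord_fix_to_Lcoord (hr : 1 < r) (hm : 0 < m) (R : Subgroup (Equiv.Perm (Fin r)))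
    (S : Subgroup (Equiv.Perm (Fin s))) (h : Equiv.Perm (Fin (m*r*s+r-1)))
    (C : Pcoord hr R S h)
    (hfx : ∀ (z : Fin r) (i : Fin s),
      h ((bigE hr).symm (Sum.inl (z,i,⟨0,hm⟩))) = (bigE hr).symm (Sum.inl (z,i,⟨0,hm⟩))) :
    Lcoord hr hm R h := by
  obtain ⟨τ, hτ, cl, ρm, hρm, hfix, Pm⟩ := C
  have hτi : ∀ i : Fin s, τ i = i := by
    intro i
    obtain ⟨ρ, hρR, hP⟩ := cl i ⟨0,hm⟩
    have h2 := (hP ((ρ:Equiv.Perm (Fin r))⁻¹ ⟨0, by omega⟩)).symm.trans (hfx (ρ⁻¹ ⟨0, by omega⟩) i)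
    have h3 := (bigE hr).symm.injective h2
    simp only [Sum.inl.injEq, Prod.mk.injEq] at h3
    exact h3.2.1
  refine ⟨hfx, fun i j hj => ?_, ρm, hρm, hfix, Pm⟩
  obtain ⟨ρ, hρR, hP⟩ := cl i j
  exact ⟨ρ, hρR, fun z => by rw [hP z, hτi i]⟩

end Aux3

section Aux4
variable {r s m : ℕ}

lemma Lcoord_one (hr : 1 < r) (hm : 0 < m) (R : Subgroup (Equiv.Perm (Fin r))) :
    Lcoord (s := s) hr hm R 1 := by
  refine ⟨fun z i => by simp, fun i j hj => ⟨1, R.one_mem, fun z => by simp⟩,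
    1, R.one_mem, rfl, fun z => ?_⟩
  simp only [Equiv.Perm.one_apply]
  rfl

lemma Lcoord_mul (hr : 1 < r) (hm : 0 < m) {R : Subgroup (Equiv.Perm (Fin r))}
    {h1 h2 : Equiv.Perm (Fin (m*r*s+r-1))}
    (C1 : Lcoord hr hm R h1) (C2 : Lcoord hr hm R h2) : Lcoord hr hm R (h1 * h2) := by
  obtain ⟨f1, cl1, ρ1m, hρ1m, fix1, P1m⟩ := C1
  obtain ⟨f2, cl2, ρ2m, hρ2m, fix2, P2m⟩ := C2
  have fix12 : (ρ1m * ρ2m) ⟨r-1, by omega⟩ = (⟨r-1, by omega⟩ : Fin r) := by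
    rw [Equiv.Perm.mul_apply, fix2, fix1]
  refine ⟨fun z i => ?_, fun i j hj => ?_, ρ1m*ρ2m, R.mul_mem hρ1m hρ2m, fix12, fun z => ?_⟩
  · simp only [Equiv.Perm.mul_apply, f2 z i, f1 z i]
  · obtain ⟨ρ2, hρ2, P2⟩ := cl2 i j hj
    obtain ⟨ρ1, hρ1, P1⟩ := cl1 i j hj
    refine ⟨ρ1*ρ2, R.mul_mem hρ1 hρ2, fun z => ?_⟩
    simp only [Equiv.Perm.mul_apply, P2 z, P1 (ρ2 z)]
  · have key : restr hr (ρ1m*ρ2m) fix12 z = restr hr ρ1m fix1 (restr hr ρ2m fix2 z) := by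
      apply Fin.ext
      simp only [restr, Equiv.Perm.mul_apply, Fin.eta]
    simp only [Equiv.Perm.mul_apply, P2m z, P1m (restr hr ρ2m fix2 z), key]

lemma Lcoord_inv (hr : 1 < r) (hm : 0 < m) {R : Subgroup (Equiv.Perm (Fin r))}
    {h : Equiv.Perm (Fin (m*r*s+r-1))}
    (C : Lcoord hr hm R h) : Lcoord hr hm R h⁻¹ := by
  obtain ⟨f, cl, ρm, hρm, fix, Pm⟩ := C
  have fix' : ρm⁻¹ ⟨r-1, by omega⟩ = (⟨r-1, by omega⟩ : Fin r) := by
    rw [Equiv.Perm.inv_eq_iff_eq, fix]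
  refine ⟨fun z i => ?_, fun i j hj => ?_, ρm⁻¹, R.inv_mem hρm, fix', fun z => ?_⟩
  · conv_lhs => rw [← f z i]
    rw [Equiv.Perm.inv_apply_self]
  · obtain ⟨ρ, hρ, P⟩ := cl i j hj
    refine ⟨ρ⁻¹, R.inv_mem hρ, fun z => ?_⟩
    have h2 := P (ρ⁻¹ z)
    rw [Equiv.Perm.apply_inv_self] at h2
    rw [← h2, Equiv.Perm.inv_apply_self]
  · have key : restr hr ρm fix (restr hr ρm⁻¹ fix' z) = z := by
      apply Fin.ext
      simp only [restr, Fin.eta, Equiv.Perm.apply_inv_self]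
    have h2 := Pm (restr hr ρm⁻¹ fix' z)
    rw [key] at h2
    rw [← h2, Equiv.Perm.inv_apply_self]

/-- `Lset` as a subgroup -/
def LsetSub (r s m : ℕ) (hr : 1 < r) (hm : 0 < m) (R : Subgroup (Equiv.Perm (Fin r))) :
    Subgroup (Equiv.Perm (Fin (m*r*s+r-1))) where
  carrier := Lset r s m hr R
  one_mem' := (mem_Lset_iff hr hm R 1).mpr (Lcoord_one hr hm R)
  mul_mem' ha hb := (mem_Lset_iff hr hm R _).mpr
    (Lcoord_mul hr hm ((mem_Lset_iff hr hm R _).mp ha) ((mem_Lset_iff hr hm R _).mp hb))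
  inv_mem' ha := (mem_Lset_iff hr hm R _).mpr (Lcoord_inv hr hm ((mem_Lset_iff hr hm R _).mp ha))

/-- inner permutation for the builder -/
def innerW (τ : Equiv.Perm (Fin s)) (f : Fin s → Equiv.Perm (Fin r)) :
    Equiv.Perm (Fin r × Fin s × Fin m) where
  toFun x := (f x.2.1 x.1, τ x.2.1, x.2.2)
  invFun x := ((f (τ⁻¹ x.2.1))⁻¹ x.1, τ⁻¹ x.2.1, x.2.2)
  left_inv := by rintro ⟨z,i,j⟩; simp
  right_inv := by rintro ⟨z,i,j⟩; simp

/-- builder of elements of `H` from wreath data -/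
def wBuild (hr : 1 < r) (τ : Equiv.Perm (Fin s)) (f : Fin s → Equiv.Perm (Fin r)) :
    Equiv.Perm (Fin (m*r*s+r-1)) :=
  ((bigE hr).symm).permCongr (Equiv.sumCongr (innerW τ f) (Equiv.refl (Fin (r-1))))

lemma wBuild_apply_inl (hr : 1 < r) (τ : Equiv.Perm (Fin s)) (f : Fin s → Equiv.Perm (Fin r))
    (z : Fin r) (i : Fin s) (j : Fin m) :
    wBuild (m := m) hr τ f ((bigE hr).symm (Sum.inl (z,i,j)))
      = (bigE hr).symm (Sum.inl (f i z, τ i, j)) := by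
  simp [wBuild, Equiv.permCongr_apply, innerW]

lemma wBuild_apply_inr (hr : 1 < r) (τ : Equiv.Perm (Fin s)) (f : Fin s → Equiv.Perm (Fin r))
    (z : Fin (r-1)) :
    wBuild (m := m) hr τ f ((bigE hr).symm (Sum.inr z)) = (bigE hr).symm (Sum.inr z) := by
  simp [wBuild, Equiv.permCongr_apply]

lemma wBuild_mem (hr : 1 < r) {R : Subgroup (Equiv.Perm (Fin r))}
    {S : Subgroup (Equiv.Perm (Fin s))} {τ : Equiv.Perm (Fin s)} {f : Fin s → Equiv.Perm (Fin r)}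
    (hτ : τ ∈ S) (hf : ∀ i, f i ∈ R) : Pcoord (m := m) hr R S (wBuild hr τ f) := by
  refine ⟨τ, hτ, fun i j => ⟨f i, hf i, fun z => wBuild_apply_inl hr τ f z i j⟩,
    1, R.one_mem, rfl, fun z => ?_⟩
  rw [wBuild_apply_inr]
  rfl

end Aux4

section Aux5
variable {r s m : ℕ} {a : Equiv.Perm (Fin (m*r*s+r-1))}

lemma fin_val_mk {n x : ℕ} (h : x < n) : ((⟨x, h⟩ : Fin n) : ℕ) = x := rfl

/-- distinguished elements -/
def fin0s (hs : 1 < s) : Fin s := ⟨0, by omega⟩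
def fin0m (hm : 3 ≤ m) : Fin m := ⟨0, by omega⟩
def finLa (hr : 1 < r) : Fin r := ⟨r-1, by omega⟩

lemma sE_inl_val' (hr : 1 < r) (z : Fin r) (i : Fin s) (j : Fin m) (vz vi vj : ℕ)
    (hz : (z:ℕ) = vz) (hi : (i:ℕ) = vi) (hj : (j:ℕ) = vj) :
    (((bigE hr).symm (Sum.inl (z,i,j)) : Fin (m*r*s+r-1)) : ℕ) = vz + vi*r + vj*(r*s) := by
  subst hz hi hj; rfl

lemma sE_congr (hr : 1 < r) {z z' : Fin r} {i i' : Fin s} {j j' : Fin m}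
    (hz : (z:ℕ) = (z':ℕ)) (hi : (i:ℕ) = (i':ℕ)) (hj : (j:ℕ) = (j':ℕ)) :
    (bigE hr).symm (Sum.inl (z,i,j)) = (bigE hr).symm (Sum.inl (z',i',j')) :=
  congrArg _ (congrArg Sum.inl (Prod.ext (Fin.ext hz) (Prod.ext (Fin.ext hi) (Fin.ext hj))))

variable (hr : 1 < r) (hs : 1 < s) (hm : 3 ≤ m)

include hr hs hm

lemma aC1 (ha : isA r s m a) (z : Fin r) (hz : (z:ℕ) < r - 1) :
    a ((bigE hr).symm (Sum.inl (z, fin0s hs, fin0m hm))) = (bigE hr).symm (Sum.inr ⟨z.1, hz⟩) := by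
  have h2 := ha.2.1 z.1 hz ((bigE hr).symm (Sum.inl (z, fin0s hs, fin0m hm)))
    (by rw [sE_inl_val' hr _ _ _ z.1 0 0 rfl rfl rfl]; omega)
  apply Fin.ext
  rw [h2, sE_inr_val hr]

lemma aC2 (ha : isA r s m a) (z : Fin r) (hz : (z:ℕ) = r - 1) :
    a ((bigE hr).symm (Sum.inl (z, fin0s hs, fin0m hm)))
      = (bigE hr).symm (Sum.inl (z, fin0s hs, fin0m hm)) :=
  ha.2.2.1 _ (by rw [sE_inl_val' hr _ _ _ z.1 0 0 rfl rfl rfl]; omega)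

lemma aC3 (ha : isA r s m a) (j : Fin m) (hjo : Odd (j:ℕ)) (hj2 : (j:ℕ) ≤ m-2) (z : Fin r) :
    a ((bigE hr).symm (Sum.inl (z, fin0s hs, j)))
      = (bigE hr).symm (Sum.inl (z, fin0s hs, ⟨(j:ℕ)+1, by omega⟩)) := by
  have h1 : 1 ≤ (j:ℕ) := hjo.pos
  have h2 := ha.2.2.2.1 j.1 hjo h1 hj2 z.1 z.2 ((bigE hr).symm (Sum.inl (z, fin0s hs, j)))
    (by rw [sE_inl_val' hr _ _ _ z.1 0 j.1 rfl rfl rfl]; omega)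
  apply Fin.ext
  rw [h2, sE_inl_val' hr _ _ _ z.1 0 (j.1+1) rfl rfl rfl]
  omega

lemma aC4 (ha : isA r s m a) (j : Fin m) (hje : Even (j:ℕ)) (hj2 : 2 ≤ (j:ℕ)) (z : Fin r) :
    a ((bigE hr).symm (Sum.inl (z, fin0s hs, j)))
      = (bigE hr).symm (Sum.inl (z, fin0s hs, ⟨(j:ℕ)-1, by omega⟩)) := by
  have h2 := ha.2.2.2.2.1 j.1 hje hj2 (by have := j.2; omega) z.1 z.2
    ((bigE hr).symm (Sum.inl (z, fin0s hs, j)))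
    (by rw [sE_inl_val' hr _ _ _ z.1 0 j.1 rfl rfl rfl]; omega)
  apply Fin.ext
  rw [h2, sE_inl_val' hr _ _ _ z.1 0 (j.1-1) rfl rfl rfl]
  omega

lemma aC5 (ha : isA r s m a) (j : Fin m) (hje : Even (j:ℕ)) (hj3 : (j:ℕ) ≤ m-3)
    (i : Fin s) (hi : (i:ℕ) ≠ 0) (z : Fin r) :
    a ((bigE hr).symm (Sum.inl (z, i, j)))
      = (bigE hr).symm (Sum.inl (z, i, ⟨(j:ℕ)+1, by omega⟩)) := by
  have h2 := ha.2.2.2.2.2.1 j.1 hje hj3 i.1 (by omega) (by have := i.2; omega) z.1 z.2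
    ((bigE hr).symm (Sum.inl (z, i, j)))
    (by rw [sE_inl_val' hr _ _ _ z.1 i.1 j.1 rfl rfl rfl])
  apply Fin.ext
  rw [h2, sE_inl_val' hr _ _ _ z.1 i.1 (j.1+1) rfl rfl rfl]

lemma aC6 (ha : isA r s m a) (j : Fin m) (hjo : Odd (j:ℕ)) (hj2 : (j:ℕ) ≤ m-2)
    (i : Fin s) (hi : (i:ℕ) ≠ 0) (z : Fin r) :
    a ((bigE hr).symm (Sum.inl (z, i, j)))
      = (bigE hr).symm (Sum.inl (z, i, ⟨(j:ℕ)-1, by omega⟩)) := by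
  have h1 : 1 ≤ (j:ℕ) := hjo.pos
  have h2 := ha.2.2.2.2.2.2.1 j.1 hjo h1 hj2 i.1 (by omega) (by have := i.2; omega) z.1 z.2
    ((bigE hr).symm (Sum.inl (z, i, j)))
    (by rw [sE_inl_val' hr _ _ _ z.1 i.1 j.1 rfl rfl rfl])
  apply Fin.ext
  rw [h2, sE_inl_val' hr _ _ _ z.1 i.1 (j.1-1) rfl rfl rfl]

lemma aC7 (ha : isA r s m a) (j : Fin m) (hjm : (j:ℕ) = m-1) (i : Fin s) (hi : (i:ℕ) ≠ 0)
    (z : Fin r) :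
    a ((bigE hr).symm (Sum.inl (z, i, j))) = (bigE hr).symm (Sum.inl (z, i, j)) :=
  ha.2.2.2.2.2.2.2.1 i.1 (by omega) (by have := i.2; omega) z.1 z.2 _
    (by rw [sE_inl_val' hr _ _ _ z.1 i.1 (m-1) rfl rfl hjm])

lemma aC8 (ha : isA r s m a) (z : Fin (r-1)) :
    a ((bigE hr).symm (Sum.inr z))
      = (bigE hr).symm (Sum.inl (⟨z.1, by omega⟩, fin0s hs, fin0m hm)) := by
  have h2 := ha.2.2.2.2.2.2.2.2 z.1 z.2 ((bigE hr).symm (Sum.inr z)) (sE_inr_val hr z)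
  apply Fin.ext
  rw [h2, sE_inl_val' hr _ _ _ z.1 0 0 rfl rfl rfl]
  omega

end Aux5

section Aux6
variable {r s m : ℕ} {a : Equiv.Perm (Fin (m*r*s+r-1))}

/-- the distinguished point `r - 1` in block coordinates -/
def ptB (hr : 1 < r) (hs : 1 < s) (hm : 3 ≤ m) : Fin (m*r*s+r-1) :=
  (bigE hr).symm (Sum.inl (finLa hr, fin0s hs, fin0m hm))

set_option maxHeartbeats 1000000 in
lemma Pcoord_conj (hr : 1 < r) (hs : 1 < s) (hm : 3 ≤ m) (hmodd : Odd m)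
    {R : Subgroup (Equiv.Perm (Fin r))} {S : Subgroup (Equiv.Perm (Fin s))}
    (ha : isA r s m a) {h : Equiv.Perm (Fin (m*r*s+r-1))} (C : Pcoord hr R S h)
    (hfx : h (ptB hr hs hm) = ptB hr hs hm) :
    Pcoord hr R S (a * h * a) := by
  have hmo : m % 2 = 1 := Nat.odd_iff.mp hmodd
  obtain ⟨τ, hτ, cl, ρm, hρm, fixm, Pm⟩ := C
  obtain ⟨ρ00, hρ00, P00⟩ := cl (fin0s hs) (fin0m hm)
  have key00 := (P00 (finLa hr)).symm.trans hfx
  have hinj := (bigE hr).symm.injective key00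
  simp only [Sum.inl.injEq, Prod.mk.injEq] at hinj
  obtain ⟨hρ00fix, hτ0, -⟩ := hinj
  have hτ0v : ((τ (fin0s hs) : Fin s) : ℕ) = 0 := congrArg Fin.val hτ0
  have hτne : ∀ i : Fin s, (i:ℕ) ≠ 0 → ((τ i : Fin s) : ℕ) ≠ 0 := by
    intro i hi hcon
    have h1 : τ i = τ (fin0s hs) := by rw [hτ0]; exact Fin.ext hcon
    exact hi (congrArg Fin.val (τ.injective h1))
  have hρ00fix' : ρ00 ⟨r-1, by omega⟩ = (⟨r-1, by omega⟩ : Fin r) := by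
    apply Fin.ext
    exact congrArg Fin.val hρ00fix
  refine ⟨τ, hτ, fun i j => ?_, ρ00, hρ00, hρ00fix', fun z => ?_⟩
  · -- blocks
    by_cases hi0 : (i:ℕ) = 0
    · have hieq : i = fin0s hs := Fin.ext hi0
      subst hieq
      rcases Nat.eq_zero_or_pos j.1 with hj0 | hjpos
      · -- block Y00
        have hjeq : j = fin0m hm := Fin.ext hj0
        subst hjeq
        refine ⟨ρm, hρm, fun z => ?_⟩
        simp only [Equiv.Perm.mul_apply]
        by_cases hz : (z:ℕ) < r-1
        · rw [aC1 hr hs hm ha z hz, Pm ⟨z.1,hz⟩, aC8 hr hs hm ha _]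
          refine sE_congr hr ?_ hτ0v.symm rfl
          exact congrArg Fin.val (congrArg ρm (Fin.ext rfl))
        · have hzv : (z:ℕ) = r-1 := by have := z.2; omega
          have hze : z = finLa hr := Fin.ext hzv
          subst hze
          have hfx' : h ((bigE hr).symm (Sum.inl (finLa hr, fin0s hs, fin0m hm)))
              = (bigE hr).symm (Sum.inl (finLa hr, fin0s hs, fin0m hm)) := hfx
          rw [aC2 hr hs hm ha _ rfl, hfx', aC2 hr hs hm ha _ rfl]
          refine sE_congr hr ?_ hτ0v.symm rfl
          show (r-1 : ℕ) = ((ρm (finLa hr) : Fin r) : ℕ)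
          rw [show ρm (finLa hr) = finLa hr from fixm]
          rfl
      · -- i = 0, j ≥ 1
        rcases Nat.even_or_odd j.1 with hje | hjo
        · -- even j ≥ 2 : go down then up
          have hje' : (j:ℕ) % 2 = 0 := Nat.even_iff.mp hje
          have hj2 : 2 ≤ (j:ℕ) := by omega
          obtain ⟨ρ, hρR, P⟩ := cl (fin0s hs) ⟨j.1-1, by omega⟩
          refine ⟨ρ, hρR, fun z => ?_⟩
          simp only [Equiv.Perm.mul_apply]
          rw [aC4 hr hs hm ha j hje hj2 z, P z, hτ0]
          rw [aC3 hr hs hm ha ⟨j.1-1, by omega⟩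
            (Nat.odd_iff.mpr (show (j.1-1) % 2 = 1 by omega))
            (show (j.1-1) ≤ m-2 by have := j.2; omega) (ρ z)]
          exact sE_congr hr rfl rfl (show j.1-1+1 = (j:ℕ) by omega)
        · -- odd j : go up then down
          have hjo' : (j:ℕ) % 2 = 1 := Nat.odd_iff.mp hjo
          have hj2 : (j:ℕ) ≤ m-2 := by have := j.2; omega
          obtain ⟨ρ, hρR, P⟩ := cl (fin0s hs) ⟨j.1+1, by omega⟩
          refine ⟨ρ, hρR, fun z => ?_⟩
          simp only [Equiv.Perm.mul_apply]
          rw [aC3 hr hs hm ha j hjo hj2 z, P z, hτ0]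
          rw [aC4 hr hs hm ha ⟨j.1+1, by omega⟩
            (Nat.even_iff.mpr (show (j.1+1) % 2 = 0 by omega))
            (show 2 ≤ j.1+1 by omega) (ρ z)]
          exact sE_congr hr rfl rfl (show j.1+1-1 = (j:ℕ) by omega)
    · -- i ≠ 0
      rcases Nat.even_or_odd j.1 with hje | hjo
      · have hje' : (j:ℕ) % 2 = 0 := Nat.even_iff.mp hje
        by_cases hjm1 : (j:ℕ) = m-1
        · obtain ⟨ρ, hρR, P⟩ := cl i j
          refine ⟨ρ, hρR, fun z => ?_⟩
          simp only [Equiv.Perm.mul_apply]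
          rw [aC7 hr hs hm ha j hjm1 i hi0 z, P z, aC7 hr hs hm ha j hjm1 (τ i) (hτne i hi0) (ρ z)]
        · -- even j ≤ m-3
          have hj3 : (j:ℕ) ≤ m-3 := by have := j.2; omega
          obtain ⟨ρ, hρR, P⟩ := cl i ⟨j.1+1, by omega⟩
          refine ⟨ρ, hρR, fun z => ?_⟩
          simp only [Equiv.Perm.mul_apply]
          rw [aC5 hr hs hm ha j hje hj3 i hi0 z, P z]
          rw [aC6 hr hs hm ha ⟨j.1+1, by omega⟩
            (Nat.odd_iff.mpr (show (j.1+1) % 2 = 1 by omega))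
            (show j.1+1 ≤ m-2 by omega) (τ i) (hτne i hi0) (ρ z)]
          exact sE_congr hr rfl rfl (show j.1+1-1 = (j:ℕ) by omega)
      · -- odd j ≤ m-2, i ≠ 0 : down then up
        have hjo' : (j:ℕ) % 2 = 1 := Nat.odd_iff.mp hjo
        have hj2 : (j:ℕ) ≤ m-2 := by have := j.2; omega
        obtain ⟨ρ, hρR, P⟩ := cl i ⟨j.1-1, by omega⟩
        refine ⟨ρ, hρR, fun z => ?_⟩
        simp only [Equiv.Perm.mul_apply]
        rw [aC6 hr hs hm ha j hjo hj2 i hi0 z, P z]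
        rw [aC5 hr hs hm ha ⟨j.1-1, by omega⟩
          (Nat.even_iff.mpr (show (j.1-1) % 2 = 0 by omega))
          (show j.1-1 ≤ m-3 by omega) (τ i) (hτne i hi0) (ρ z)]
        exact sE_congr hr rfl rfl (show j.1-1+1 = (j:ℕ) by omega)
  · -- X_m
    simp only [Equiv.Perm.mul_apply]
    rw [aC8 hr hs hm ha z, P00 ⟨z.1, by omega⟩, hτ0,
      aC1 hr hs hm ha _ (perm_lt_last hr ρ00 hρ00fix' z.1 z.2)]
    exact congrArg _ (congrArg Sum.inr (Fin.ext rfl))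

end Aux6

section Aux7
variable {r s m : ℕ} {a : Equiv.Perm (Fin (m*r*s+r-1))}

lemma fix_of_conj (hr : 1 < r) (hs : 1 < s) (hm : 3 ≤ m)
    {R : Subgroup (Equiv.Perm (Fin r))} {S : Subgroup (Equiv.Perm (Fin s))}
    (ha : isA r s m a) {h : Equiv.Perm (Fin (m*r*s+r-1))} (C : Pcoord hr R S h)
    (D : Pcoord hr R S (a*h*a)) : h (ptB hr hs hm) = ptB hr hs hm := by
  obtain ⟨τ, hτ, cl, -⟩ := C
  obtain ⟨ρ00, hρ00, P00⟩ := cl (fin0s hs) (fin0m hm)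
  obtain ⟨τ', hτ', cl', -⟩ := D
  obtain ⟨ρ', hρ'R, P'⟩ := cl' (fin0s hs) (fin0m hm)
  have eq1 := P' (finLa hr)
  have eq2 : (a*h*a) ((bigE hr).symm (Sum.inl (finLa hr, fin0s hs, fin0m hm)))
      = a (h ((bigE hr).symm (Sum.inl (finLa hr, fin0s hs, fin0m hm)))) := by
    simp only [Equiv.Perm.mul_apply, aC2 hr hs hm ha (finLa hr) rfl]
  rw [eq2, P00 (finLa hr)] at eq1
  by_cases hc : ((τ (fin0s hs) : Fin s) : ℕ) = 0
  · have hceq : τ (fin0s hs) = fin0s hs := Fin.ext hc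
    rw [hceq] at eq1
    by_cases hw : ((ρ00 (finLa hr) : Fin r) : ℕ) < r - 1
    · exfalso
      rw [aC1 hr hs hm ha _ hw] at eq1
      have := (bigE hr).symm.injective eq1
      simp at this
    · have hwv : ρ00 (finLa hr) = finLa hr := by
        apply Fin.ext
        have := (ρ00 (finLa hr)).2
        show ((ρ00 (finLa hr) : Fin r) : ℕ) = r-1
        omega
      show h ((bigE hr).symm (Sum.inl (finLa hr, fin0s hs, fin0m hm)))
          = (bigE hr).symm (Sum.inl (finLa hr, fin0s hs, fin0m hm))
      rw [P00 (finLa hr), hceq, hwv]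
  · exfalso
    rw [aC5 hr hs hm ha (fin0m hm) Even.zero (show (0:ℕ) ≤ m-3 by omega)
      (τ (fin0s hs)) hc (ρ00 (finLa hr))] at eq1
    have hinj := (bigE hr).symm.injective eq1
    simp only [Sum.inl.injEq, Prod.mk.injEq] at hinj
    obtain ⟨-, -, h3⟩ := hinj
    have h4 : ((fin0m hm : Fin m) : ℕ) + 1 = ((fin0m hm : Fin m) : ℕ) := congrArg Fin.val h3
    omega

end Aux7

section Aux8
variable {r s m : ℕ}

/-- embedding of `Fin r × Fin s` as the first column `X_0` -/
def embX (hr : 1 < r) (hs : 1 < s) (hm : 3 ≤ m) (p : Fin r × Fin s) : Fin (m*r*s+r-1) :=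
  (bigE hr).symm (Sum.inl (p.1, p.2, fin0m hm))

/-- partial inverse -/
def decX (hr : 1 < r) (hs : 1 < s) (ω : Fin (m*r*s+r-1)) : Fin r × Fin s :=
  Sum.elim (fun x => (x.1, x.2.1)) (fun _ => (⟨0, by omega⟩, ⟨0, by omega⟩)) (bigE hr ω)

lemma decX_embX (hr : 1 < r) (hs : 1 < s) (hm : 3 ≤ m) (p : Fin r × Fin s) :
    decX hr hs (embX hr hs hm p) = p := by
  simp [decX, embX, Equiv.apply_symm_apply]

lemma embX_inj (hr : 1 < r) (hs : 1 < s) (hm : 3 ≤ m) :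
    Function.Injective (embX (m := m) hr hs hm) := by
  intro p q h
  have h2 := (bigE hr).symm.injective h
  simp only [Sum.inl.injEq, Prod.mk.injEq] at h2
  exact Prod.ext h2.1 h2.2.1

lemma ptB_eq (hr : 1 < r) (hs : 1 < s) (hm : 3 ≤ m) :
    ptB hr hs hm = embX hr hs hm (finLa hr, fin0s hs) := rfl

lemma Pcoord_embX (hr : 1 < r) (hs : 1 < s) (hm : 3 ≤ m)
    {R : Subgroup (Equiv.Perm (Fin r))} {S : Subgroup (Equiv.Perm (Fin s))}
    {h : Equiv.Perm (Fin (m*r*s+r-1))} (C : Pcoord hr R S h) :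
    ∃ τ ∈ S, ∀ i : Fin s, ∃ ρ ∈ R, ∀ z : Fin r,
      h (embX hr hs hm (z, i)) = embX hr hs hm (ρ z, τ i) := by
  obtain ⟨τ, hτ, cl, -⟩ := C
  refine ⟨τ, hτ, fun i => ?_⟩
  obtain ⟨ρ, hρ, P⟩ := cl i (fin0m hm)
  exact ⟨ρ, hρ, fun z => P z⟩

lemma exists_embX (hr : 1 < r) (hs : 1 < s) (hm : 3 ≤ m)
    {R : Subgroup (Equiv.Perm (Fin r))} {S : Subgroup (Equiv.Perm (Fin s))}
    {h : Equiv.Perm (Fin (m*r*s+r-1))} (C : Pcoord hr R S h) (p : Fin r × Fin s) :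
    ∃ q, h (embX hr hs hm p) = embX hr hs hm q := by
  obtain ⟨τ, hτ, cl⟩ := Pcoord_embX hr hs hm C
  obtain ⟨ρ, hρ, P⟩ := cl p.2
  exact ⟨(ρ p.1, τ p.2), P p.1⟩

variable (hr : 1 < r) (hs : 1 < s) (hm : 3 ≤ m)
  (R : Subgroup (Equiv.Perm (Fin r))) (S : Subgroup (Equiv.Perm (Fin s)))

/-- the permutation of `Fin r × Fin s` induced by `x ∈ H` -/
def phiP (x : ↥(HsetSub r s m hr R S)) : Equiv.Perm (Fin r × Fin s) where
  toFun p := decX hr hs ((x : Equiv.Perm (Fin (m*r*s+r-1))) (embX hr hs hm p))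
  invFun p := decX hr hs (((x : Equiv.Perm (Fin (m*r*s+r-1))))⁻¹ (embX hr hs hm p))
  left_inv p := by
    obtain ⟨q, hq⟩ := exists_embX hr hs hm ((mem_HsetSub_iff hr R S _).mp x.2) p
    dsimp only
    rw [hq, decX_embX, ← hq, Equiv.Perm.inv_apply_self, decX_embX]
  right_inv p := by
    obtain ⟨q, hq⟩ := exists_embX hr hs hm
      (Pcoord_inv hr ((mem_HsetSub_iff hr R S _).mp x.2)) p
    dsimp only
    rw [hq, decX_embX, ← hq, Equiv.Perm.apply_inv_self, decX_embX]

lemma phiP_apply (x : ↥(HsetSub r s m hr R S)) (p : Fin r × Fin s) :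
    phiP hr hs hm R S x p
      = decX hr hs ((x : Equiv.Perm (Fin (m*r*s+r-1))) (embX hr hs hm p)) := rfl

/-- the homomorphism `H →* Perm (Fin r × Fin s)` -/
def phiHom : ↥(HsetSub r s m hr R S) →* Equiv.Perm (Fin r × Fin s) :=
  MonoidHom.mk' (phiP hr hs hm R S) (by
    intro x y
    apply Equiv.ext
    intro p
    obtain ⟨q, hq⟩ := exists_embX hr hs hm ((mem_HsetSub_iff hr R S _).mp y.2) p
    show decX hr hs (((x*y : ↥(HsetSub r s m hr R S)) :
        Equiv.Perm (Fin (m*r*s+r-1))) (embX hr hs hm p)) = _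
    rw [Subgroup.coe_mul, Equiv.Perm.mul_apply, hq]
    show _ = decX hr hs ((x : Equiv.Perm (Fin (m*r*s+r-1)))
      (embX hr hs hm (decX hr hs ((y : Equiv.Perm (Fin (m*r*s+r-1))) (embX hr hs hm p)))))
    rw [hq, decX_embX])

lemma transitive_phi (hR : ∀ u v : Fin r, ∃ g ∈ R, g u = v)
    (hS : ∀ u v : Fin s, ∃ g ∈ S, g u = v) (p : Fin r × Fin s) :
    ∃ h : Equiv.Perm (Fin (m*r*s+r-1)), Pcoord hr R S h ∧ h (ptB hr hs hm) = embX hr hs hm p := by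
  obtain ⟨g, hgR, hg⟩ := hR (finLa hr) p.1
  obtain ⟨t, htS, ht⟩ := hS (fin0s hs) p.2
  refine ⟨wBuild hr t (fun _ => g), wBuild_mem hr htS (fun _ => hgR), ?_⟩
  rw [ptB_eq]
  show wBuild hr t (fun _ => g) ((bigE hr).symm (Sum.inl (finLa hr, fin0s hs, fin0m hm))) = _
  rw [wBuild_apply_inl, hg, ht]
  rfl

lemma mem_Ha_iff {a : Equiv.Perm (Fin (m*r*s+r-1))} (haa : a * a = 1)
    (x : Equiv.Perm (Fin (m*r*s+r-1))) :
    x ∈ Subgroup.map ((MulAut.conj a⁻¹ : Equiv.Perm (Fin (m*r*s+r-1)) ≃*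
        Equiv.Perm (Fin (m*r*s+r-1)))).toMonoidHom (HsetSub r s m hr R S)
      ↔ a * x * a ∈ HsetSub r s m hr R S := by
  have hainv : a⁻¹ = a := inv_eq_of_mul_eq_one_right haa
  rw [Subgroup.mem_map_equiv, MulAut.conj_symm_apply, inv_inv, hainv]

end Aux8

set_option maxHeartbeats 1000000 in
theorem stmt19 (r s m : ℕ) (hr : 1 < r) (hs : 1 < s) (hm : 3 ≤ m) (hmodd : Odd m)
    (R : Subgroup (Equiv.Perm (Fin r))) (S : Subgroup (Equiv.Perm (Fin s)))
    (hR : ∀ u v : Fin r, ∃ g ∈ R, g u = v) (hS : ∀ u v : Fin s, ∃ g ∈ S, g u = v)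
    (a : Equiv.Perm (Fin (m * r * s + r - 1))) (ha : isA r s m a)
    (HH Ha LL : Subgroup (Equiv.Perm (Fin (m * r * s + r - 1))))
    (hHH : HH = Subgroup.closure (Hset r s m hr R S))
    (hHa : Ha = Subgroup.map ((MulAut.conj a⁻¹ :
      Equiv.Perm (Fin (m * r * s + r - 1)) ≃* Equiv.Perm (Fin (m * r * s + r - 1)))).toMonoidHom HH)
    (hLL : LL = Subgroup.closure (Lset r s m hr R)) :
    (HH ⊓ Ha).relIndex HH = r * s ∧
    Subgroup.map HH.subtype (((HH ⊓ Ha).subgroupOf HH).normalCore) = LL ∧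
    ∃ (φ : HH →* Equiv.Perm (Fin r × Fin s))
      (e : (HH ⧸ (HH ⊓ Ha).subgroupOf HH) ≃ Fin r × Fin s),
      φ.ker = LL.subgroupOf HH ∧
      (φ.range : Set (Equiv.Perm (Fin r × Fin s))) = wreathSet R S ∧
      ∀ (h : HH) (q : HH ⧸ (HH ⊓ Ha).subgroupOf HH), e (h • q) = φ h (e q) := by
  have hm0 : 0 < m := by omega
  have haa : a * a = 1 := ha.1
  have hHset : Hset r s m hr R S = ↑(HsetSub r s m hr R S) := rfl
  have hLset : Lset r s m hr R = ↑(LsetSub r s m hr hm0 R) := rfl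
  subst hHa hHH hLL
  rw [hHset, hLset, Subgroup.closure_eq, Subgroup.closure_eq]
  set Hb := HsetSub r s m hr R S with hHb
  set Lb := LsetSub r s m hr hm0 R with hLb
  set Hc := Subgroup.map ((MulAut.conj a⁻¹ :
      Equiv.Perm (Fin (m * r * s + r - 1)) ≃*
        Equiv.Perm (Fin (m * r * s + r - 1)))).toMonoidHom Hb with hHc
  set K := (Hb ⊓ Hc).subgroupOf Hb with hK
  have hPc : ∀ x : ↥Hb, Pcoord hr R S (x : Equiv.Perm (Fin (m*r*s+r-1))) :=
    fun x => (mem_HsetSub_iff hr R S _).mp x.2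
  -- membership in K is fixing the point ptB
  have memK : ∀ x : ↥Hb, x ∈ K ↔
      (x : Equiv.Perm (Fin (m*r*s+r-1))) (ptB hr hs hm) = ptB hr hs hm := by
    intro x
    rw [hK, Subgroup.mem_subgroupOf, Subgroup.mem_inf]
    constructor
    · rintro ⟨-, hx2⟩
      exact fix_of_conj hr hs hm ha (hPc x)
        ((mem_HsetSub_iff hr R S _).mp ((mem_Ha_iff hr R S haa _).mp hx2))
    · intro hfix
      exact ⟨x.2, (mem_Ha_iff hr R S haa _).mpr
        ((mem_HsetSub_iff hr R S _).mpr (Pcoord_conj hr hs hm hmodd ha (hPc x) hfix))⟩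
  -- the function to Fin r × Fin s
  have f_spec : ∀ x : ↥Hb, (x : Equiv.Perm (Fin (m*r*s+r-1))) (ptB hr hs hm)
      = embX hr hs hm (decX hr hs ((x : Equiv.Perm (Fin (m*r*s+r-1))) (ptB hr hs hm))) := by
    intro x
    obtain ⟨q, hq⟩ := exists_embX hr hs hm (hPc x) (finLa hr, fin0s hs)
    rw [ptB_eq, hq, decX_embX]
  have hcoe3 : ∀ (b x : ↥Hb), ((b * x * b⁻¹ : ↥Hb) : Equiv.Perm (Fin (m*r*s+r-1)))
      = (b : Equiv.Perm (Fin (m*r*s+r-1))) * x * (b : Equiv.Perm (Fin (m*r*s+r-1)))⁻¹ := by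
    intro b x; rfl
  -- fixing all of X_0 is the same as membership in Lb
  have hLfix : ∀ x : ↥Hb,
      (∀ p : Fin r × Fin s, (x : Equiv.Perm (Fin (m*r*s+r-1))) (embX hr hs hm p)
        = embX hr hs hm p) ↔ (x : Equiv.Perm (Fin (m*r*s+r-1))) ∈ Lb := by
    intro x
    constructor
    · intro hfix
      exact (mem_Lset_iff hr hm0 R _).mpr
        (Pcoord_fix_to_Lcoord hr hm0 R S _ (hPc x) (fun z i => hfix (z, i)))
    · intro hxL p
      exact ((mem_Lset_iff hr hm0 R _).mp hxL).1 p.1 p.2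
  -- the equivalence of the quotient with Fin r × Fin s
  let e0 : (↥Hb ⧸ K) → Fin r × Fin s := fun q => Quotient.liftOn' q
    (fun x => decX hr hs ((x : Equiv.Perm (Fin (m*r*s+r-1))) (ptB hr hs hm)))
    (by
      intro x y hxy
      have h1 : x⁻¹ * y ∈ K := (QuotientGroup.leftRel_apply).mp hxy
      rw [memK] at h1
      have h2 : (y : Equiv.Perm (Fin (m*r*s+r-1))) (ptB hr hs hm)
          = (x : Equiv.Perm (Fin (m*r*s+r-1))) (ptB hr hs hm) := by
        have h3 : ((x : Equiv.Perm (Fin (m*r*s+r-1))))⁻¹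
            ((y : Equiv.Perm (Fin (m*r*s+r-1))) (ptB hr hs hm)) = ptB hr hs hm := h1
        have h4 := congrArg (x : Equiv.Perm (Fin (m*r*s+r-1))) h3
        rwa [Equiv.Perm.apply_inv_self] at h4
      simp only [h2])
  have e0_mk : ∀ g : ↥Hb, e0 (QuotientGroup.mk g)
      = decX hr hs ((g : Equiv.Perm (Fin (m*r*s+r-1))) (ptB hr hs hm)) := fun g => rfl
  have e0_bij : Function.Bijective e0 := by
    constructor
    · intro q1 q2
      induction q1 using Quotient.inductionOn' with | h g1 => ?_
      induction q2 using Quotient.inductionOn' with | h g2 => ?_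
      intro h12
      have h1 : (g1 : Equiv.Perm (Fin (m*r*s+r-1))) (ptB hr hs hm)
          = (g2 : Equiv.Perm (Fin (m*r*s+r-1))) (ptB hr hs hm) := by
        rw [f_spec g1, f_spec g2]
        exact congrArg _ h12
      apply Quotient.sound'
      rw [QuotientGroup.leftRel_apply, memK]
      show ((g1⁻¹ * g2 : ↥Hb) : Equiv.Perm (Fin (m*r*s+r-1))) (ptB hr hs hm) = ptB hr hs hm
      rw [show ((g1⁻¹ * g2 : ↥Hb) : Equiv.Perm (Fin (m*r*s+r-1)))
        = ((g1 : Equiv.Perm (Fin (m*r*s+r-1))))⁻¹ * g2 from rfl]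
      rw [Equiv.Perm.mul_apply, ← h1, Equiv.Perm.inv_apply_self]
    · intro p
      obtain ⟨h0, hC, hpt⟩ := transitive_phi hr hs hm R S hR hS p
      refine ⟨QuotientGroup.mk ⟨h0, (mem_HsetSub_iff hr R S _).mpr hC⟩, ?_⟩
      rw [e0_mk]
      show decX hr hs (h0 (ptB hr hs hm)) = p
      rw [hpt, decX_embX]
  let e : (↥Hb ⧸ K) ≃ (Fin r × Fin s) := Equiv.ofBijective e0 e0_bij
  have e_mk : ∀ g : ↥Hb, e (QuotientGroup.mk g)
      = decX hr hs ((g : Equiv.Perm (Fin (m*r*s+r-1))) (ptB hr hs hm)) := fun g => rfl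
  refine ⟨?_, ?_, phiHom hr hs hm R S, e, ?_, ?_, ?_⟩
  · -- index
    show ((Hb ⊓ Hc).subgroupOf Hb).index = r * s
    rw [← hK, Subgroup.index_eq_card, Nat.card_congr e]
    simp [Nat.card_eq_fintype_card]
  · -- normal core
    have hLle : Lb ≤ Hb := by
      intro x hx
      exact (mem_HsetSub_iff hr R S _).mpr
        (Lcoord_to_Pcoord hr hm0 R S _ ((mem_Lset_iff hr hm0 R _).mp hx))
    have hcore : K.normalCore = Lb.subgroupOf Hb := by
      ext x
      have hmemNC : x ∈ K.normalCore ↔ ∀ b : ↥Hb, b * x * b⁻¹ ∈ K := Iff.rfl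
      rw [hmemNC, Subgroup.mem_subgroupOf]
      constructor
      · intro hall
        rw [← hLfix]
        intro p
        obtain ⟨h0, hC, hpt⟩ := transitive_phi hr hs hm R S hR hS p
        have h0mem : h0 ∈ Hb := (mem_HsetSub_iff hr R S _).mpr hC
        have h1 := hall (⟨h0, h0mem⟩ : ↥Hb)⁻¹
        rw [memK] at h1
        have h1' : (h0⁻¹ * (x : Equiv.Perm (Fin (m*r*s+r-1))) * h0) (ptB hr hs hm)
            = ptB hr hs hm := h1
        have h2 : (x : Equiv.Perm (Fin (m*r*s+r-1))) (h0 (ptB hr hs hm))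
            = h0 (ptB hr hs hm) := by
          have h3 := congrArg h0 h1'
          simpa only [Equiv.Perm.mul_apply, Equiv.Perm.apply_inv_self] using h3
        rwa [hpt] at h2
      · intro hxL b
        rw [memK, hcoe3]
        have hfix := (hLfix x).mpr hxL
        obtain ⟨q, hq⟩ := exists_embX hr hs hm (hPc b⁻¹) (finLa hr, fin0s hs)
        rw [← ptB_eq] at hq
        have hbinv : ((b⁻¹ : ↥Hb) : Equiv.Perm (Fin (m*r*s+r-1)))
            = ((b : Equiv.Perm (Fin (m*r*s+r-1))))⁻¹ := rfl
        rw [hbinv] at hq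
        rw [Equiv.Perm.mul_apply, Equiv.Perm.mul_apply, hq, hfix q, ← hq,
          Equiv.Perm.apply_inv_self]
    rw [hcore, Subgroup.subgroupOf_map_subtype, inf_eq_left.mpr hLle]
  · -- kernel
    ext x
    rw [MonoidHom.mem_ker, Subgroup.mem_subgroupOf]
    constructor
    · intro h1
      rw [← hLfix]
      intro p
      obtain ⟨q, hq⟩ := exists_embX hr hs hm (hPc x) p
      have h2 : phiP hr hs hm R S x p = p := Equiv.ext_iff.mp h1 p
      rw [phiP_apply, hq, decX_embX] at h2
      rw [hq, h2]
    · intro hxL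
      have hfix := (hLfix x).mpr hxL
      apply Equiv.ext
      intro p
      show phiP hr hs hm R S x p = p
      rw [phiP_apply, hfix p, decX_embX]
  · -- range
    ext σp
    simp only [SetLike.mem_coe, MonoidHom.mem_range]
    constructor
    · rintro ⟨x, rfl⟩
      obtain ⟨τ, hτ, cl⟩ := Pcoord_embX hr hs hm (hPc x)
      choose ρf hρf hP using cl
      refine ⟨τ, hτ, ρf, hρf, fun p => ?_⟩
      show phiP hr hs hm R S x p = _
      rw [phiP_apply, hP p.2 p.1, decX_embX]
    · rintro ⟨τ, hτ, f, hf, hform⟩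
      refine ⟨⟨wBuild hr τ f, (mem_HsetSub_iff hr R S _).mpr (wBuild_mem hr hτ hf)⟩, ?_⟩
      apply Equiv.ext
      intro p
      show decX hr hs (wBuild hr τ f (embX hr hs hm p)) = σp p
      rw [show embX hr hs hm p = (bigE hr).symm (Sum.inl (p.1, p.2, fin0m hm)) from rfl,
        wBuild_apply_inl, hform p]
      exact decX_embX hr hs hm (f p.2 p.1, τ p.2)
  · -- equivariance
    intro h q
    induction q using Quotient.inductionOn' with | h g => ?_
    have hmk : (Quotient.mk'' g : ↥Hb ⧸ K) = QuotientGroup.mk g := rfl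
    rw [hmk]
    have hsm : h • (QuotientGroup.mk g : ↥Hb ⧸ K) = QuotientGroup.mk (h * g) :=
      MulAction.Quotient.smul_mk K h g
    rw [hsm, e_mk, e_mk]
    show decX hr hs (((h * g : ↥Hb) : Equiv.Perm (Fin (m*r*s+r-1))) (ptB hr hs hm))
      = phiP hr hs hm R S h (decX hr hs ((g : Equiv.Perm (Fin (m*r*s+r-1))) (ptB hr hs hm)))
    rw [phiP_apply, ← f_spec g,
      show ((h * g : ↥Hb) : Equiv.Perm (Fin (m*r*s+r-1)))
        = (h : Equiv.Perm (Fin (m*r*s+r-1))) * g from rfl,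
      Equiv.Perm.mul_apply]
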